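/- Let ω be a nonzero Radon measure on ℝⁿ with support F := spt ω, and let p ∈ F. Assume: (a) for every ν ∈ Tan(ω,p), every x ∈ spt ν and every r > 0, T_{x,r}[ν] ∈ Tan(ω,p); and (b) for every sequence ρ_i ↓ 0 there exist a subsequence ρ_{i_k}, constants c_k > 0 and a nonzero Radon measure ν ∈ Tan(ω,p) such that c_k T_{p,ρ_{i_k}}[ω] → ν in the weak-* sense and (F−p)/ρ_{i_k} → spt ν locally Hausdorff. Then for every Σ ∈ Tan(F,p), every x ∈ Σ and every r > 0, one has (Σ − x)/r ∈ Tan(F,p). -/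

import Mathlib

open MeasureTheory Metric Filter Topology Set

/-- The pushforward of `μ` under `T_{a,r}(x) = (x - a)/r`. -/
noncomputable def blowup {n : ℕ} (μ : Measure (EuclideanSpace ℝ (Fin n)))
    (a : EuclideanSpace ℝ (Fin n)) (r : ℝ) : Measure (EuclideanSpace ℝ (Fin n)) :=
  Measure.map (fun x => r⁻¹ • (x - a)) μ

/-- Weak-* convergence of a sequence of measures on `ℝⁿ`. -/
def WeakStarTendsto {n : ℕ} (μ : ℕ → Measure (EuclideanSpace ℝ (Fin n)))
    (ν : Measure (EuclideanSpace ℝ (Fin n))) : Prop :=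
  ∀ f : EuclideanSpace ℝ (Fin n) → ℝ, Continuous f → HasCompactSupport f →
    Tendsto (fun i => ∫ x, f x ∂(μ i)) atTop (𝓝 (∫ x, f x ∂ν))

/-- The tangent measures of `μ` at `a`: nonzero Radon measures `ν` which are weak-* limits
of `c_i T_{a,r_i}[μ]` for some `c_i > 0` and `r_i ↓ 0`. -/
def TanM {n : ℕ} (μ : Measure (EuclideanSpace ℝ (Fin n))) (a : EuclideanSpace ℝ (Fin n)) :
    Set (Measure (EuclideanSpace ℝ (Fin n))) :=
  {ν | ν ≠ 0 ∧ IsLocallyFiniteMeasure ν ∧ ∃ c r : ℕ → ℝ,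
    (∀ i, 0 < c i) ∧ (∀ i, 0 < r i) ∧ Tendsto r atTop (𝓝 0) ∧
    WeakStarTendsto (fun i => ENNReal.ofReal (c i) • blowup μ a (r i)) ν}

/-- The support of a measure: the set of points all of whose balls have positive measure. -/
def sptSet {n : ℕ} (ν : Measure (EuclideanSpace ℝ (Fin n))) : Set (EuclideanSpace ℝ (Fin n)) :=
  {x | ∀ ρ : ℝ, 0 < ρ → 0 < ν (ball x ρ)}

/-- `τ_r(K,S) = (1/r)·dist_H[K ∩ B̄_r, S ∩ B̄_r]`, the normalized Hausdorff distance at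
scale `r` between two closed sets. -/
noncomputable def tauDist {n : ℕ} (r : ℝ) (K S : Set (EuclideanSpace ℝ (Fin n))) : ℝ :=
  r⁻¹ * Metric.hausdorffDist (K ∩ closedBall 0 r) (S ∩ closedBall 0 r)

/-- Local Hausdorff convergence of a sequence of closed sets: `τ_r(F_i, S) → 0` for every
`r > 0`. -/
def LocHausTendsto {n : ℕ} (F : ℕ → Set (EuclideanSpace ℝ (Fin n)))
    (S : Set (EuclideanSpace ℝ (Fin n))) : Prop :=
  ∀ r : ℝ, 0 < r → Tendsto (fun i => tauDist r (F i) S) atTop (𝓝 0)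

/-- The set-theoretic tangents of a closed set `F` at `p`: nonempty closed sets `S` which are
local Hausdorff limits of `(F − p)/r_i` for some `r_i ↓ 0`. -/
def TanSet {n : ℕ} (F : Set (EuclideanSpace ℝ (Fin n))) (p : EuclideanSpace ℝ (Fin n)) :
    Set (Set (EuclideanSpace ℝ (Fin n))) :=
  {S | S.Nonempty ∧ IsClosed S ∧ ∃ r : ℕ → ℝ, (∀ i, 0 < r i) ∧ Tendsto r atTop (𝓝 0) ∧
    LocHausTendsto (fun i => (fun x => (r i)⁻¹ • (x - p)) '' F) S}

section Aux

variable {n : ℕ}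

local notation "E" => EuclideanSpace ℝ (Fin n)

lemma sptSet_isClosed (ν : Measure E) : IsClosed (sptSet ν) := by
  rw [← isOpen_compl_iff, Metric.isOpen_iff]
  intro x hx
  simp only [sptSet, mem_compl_iff, mem_setOf_eq, not_forall] at hx
  obtain ⟨ρ, hρ, hz⟩ := hx
  obtain ⟨hρ, hz⟩ : 0 < ρ ∧ ¬0 < ν (ball x ρ) := ⟨hρ, hz⟩
  rw [not_lt, nonpos_iff_eq_zero] at hz
  refine ⟨ρ / 2, by positivity, fun y hy => ?_⟩
  simp only [sptSet, mem_compl_iff, mem_setOf_eq, not_forall]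
  refine ⟨ρ / 2, by positivity, ?_⟩
  rw [not_lt, nonpos_iff_eq_zero]
  refine measure_mono_null (fun w hw => ?_) hz
  rw [mem_ball] at *
  calc dist w x ≤ dist w y + dist y x := dist_triangle w y x
    _ < ρ / 2 + ρ / 2 := add_lt_add hw hy
    _ = ρ := by ring

lemma sptSet_nonempty {ν : Measure E} (hν : ν ≠ 0) : (sptSet ν).Nonempty := by
  by_contra h
  rw [not_nonempty_iff_eq_empty] at h
  apply hν
  rw [← Measure.measure_univ_eq_zero]
  apply measure_null_of_locally_null
  intro x _
  have hx : x ∉ sptSet ν := by simp [h]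
  simp only [sptSet, mem_setOf_eq, not_forall] at hx
  obtain ⟨ρ, hρ, hz⟩ := hx
  obtain ⟨hρ, hz⟩ : 0 < ρ ∧ ¬0 < ν (ball x ρ) := ⟨hρ, hz⟩
  rw [not_lt, nonpos_iff_eq_zero] at hz
  exact ⟨ball x ρ, by rw [nhdsWithin_univ]; exact ball_mem_nhds x hρ, hz⟩

lemma exists_bump (z : E) {ρ : ℝ} (hρ : 0 < ρ) :
    ∃ f : E → ℝ, Continuous f ∧ HasCompactSupport f ∧ (∀ y, 0 ≤ f y) ∧ (∀ y, f y ≤ 1) ∧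
      (∀ y ∈ closedBall z (ρ / 2), f y = 1) ∧ (∀ y ∉ ball z ρ, f y = 0) := by
  refine ⟨fun y => max 0 (min 1 (2 - (2 / ρ) * dist y z)), ?_, ?_, fun y => le_max_left _ _,
    fun y => max_le (by norm_num) (min_le_left _ _), ?_, ?_⟩
  · exact continuous_const.max (continuous_const.min (continuous_const.sub
      (continuous_const.mul (continuous_id.dist continuous_const))))
  · apply HasCompactSupport.intro (isCompact_closedBall z ρ)
    intro y hy
    rw [mem_closedBall, not_le] at hy
    have h1 : 2 - (2 / ρ) * dist y z ≤ 0 := by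
      have : (2 / ρ) * ρ ≤ (2 / ρ) * dist y z :=
        mul_le_mul_of_nonneg_left hy.le (by positivity)
      rw [div_mul_cancel₀] at this
      · linarith
      · exact hρ.ne'
    exact max_eq_left ((min_le_right _ _).trans h1)
  · intro y hy
    rw [mem_closedBall] at hy
    have h1 : (1 : ℝ) ≤ 2 - (2 / ρ) * dist y z := by
      have : (2 / ρ) * dist y z ≤ (2 / ρ) * (ρ / 2) :=
        mul_le_mul_of_nonneg_left hy (by positivity)
      have h2 : (2 / ρ) * (ρ / 2) = 1 := by field_simp
      linarith
    show max 0 (min 1 (2 - (2 / ρ) * dist y z)) = 1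
    rw [min_eq_left h1, max_eq_right zero_le_one]
  · intro y hy
    rw [mem_ball, not_lt] at hy
    have h1 : 2 - (2 / ρ) * dist y z ≤ 0 := by
      have : (2 / ρ) * ρ ≤ (2 / ρ) * dist y z :=
        mul_le_mul_of_nonneg_left hy (by positivity)
      rw [div_mul_cancel₀] at this
      · linarith
      · exact hρ.ne'
    exact max_eq_left ((min_le_right _ _).trans h1)

lemma integral_bump_lower (μ : Measure E) [IsLocallyFiniteMeasure μ] {f : E → ℝ}
    (hfc : Continuous f) (hfs : HasCompactSupport f) (hf0 : ∀ y, 0 ≤ f y)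
    {z : E} {t : ℝ} (hfone : ∀ y ∈ closedBall z t, f y = 1) :
    (μ (closedBall z t)).toReal ≤ ∫ x, f x ∂μ := by
  have hint : Integrable f μ := hfc.integrable_of_hasCompactSupport hfs
  have h1 : ∫ x in closedBall z t, f x ∂μ = (μ (closedBall z t)).toReal := by
    rw [setIntegral_congr_fun measurableSet_closedBall hfone]
    simp [Measure.restrict_apply_univ, measureReal_def]
  calc (μ (closedBall z t)).toReal = ∫ x in closedBall z t, f x ∂μ := h1.symm
    _ ≤ ∫ x, f x ∂μ := setIntegral_le_integral hint
        (Filter.Eventually.of_forall hf0)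

lemma exists_pos_integral (μ : Measure E) [IsLocallyFiniteMeasure μ] (hμ : μ ≠ 0) :
    ∃ f : E → ℝ, Continuous f ∧ HasCompactSupport f ∧ (∀ y, 0 ≤ f y) ∧ 0 < ∫ x, f x ∂μ := by
  obtain ⟨z, hz⟩ := sptSet_nonempty hμ
  obtain ⟨f, hfc, hfs, hf0, hf1, hfone, hfzero⟩ := exists_bump z (by norm_num : (0:ℝ) < 2)
  refine ⟨f, hfc, hfs, hf0, lt_of_lt_of_le ?_ (integral_bump_lower μ hfc hfs hf0 hfone)⟩
  apply ENNReal.toReal_pos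
  · refine ne_of_gt (lt_of_lt_of_le (hz 1 one_pos) (measure_mono ?_))
    exact ball_subset_closedBall.trans (closedBall_subset_closedBall (by norm_num))
  · exact (isCompact_closedBall z _).measure_lt_top.ne

lemma sptSet_subset_of_integral_eq (μ ν : Measure E) [IsLocallyFiniteMeasure μ]
    [IsLocallyFiniteMeasure ν] {lam : ℝ} (hlam : 0 < lam)
    (h : ∀ g : E → ℝ, Continuous g → HasCompactSupport g →
      ∫ x, g x ∂ν = lam * ∫ x, g x ∂μ) :
    sptSet μ ⊆ sptSet ν := by
  intro z hz ρ hρ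
  obtain ⟨f, hfc, hfs, hf0, hf1, hfone, hfzero⟩ := exists_bump z hρ
  have hμpos : 0 < ∫ x, f x ∂μ := by
    refine lt_of_lt_of_le ?_ (integral_bump_lower μ hfc hfs hf0 hfone)
    apply ENNReal.toReal_pos
    · exact ne_of_gt (lt_of_lt_of_le (hz (ρ / 2) (by positivity))
        (measure_mono ball_subset_closedBall))
    · exact (isCompact_closedBall z (ρ / 2)).measure_lt_top.ne
  have hνpos : 0 < ∫ x, f x ∂ν := by
    rw [h f hfc hfs]; positivity
  by_contra hcon
  rw [not_lt, nonpos_iff_eq_zero] at hcon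
  have hae : f =ᵐ[ν] 0 := by
    rw [Filter.EventuallyEq, ae_iff]
    refine measure_mono_null (fun y hy => ?_) hcon
    simp only [mem_setOf_eq] at hy
    by_contra hyb
    exact hy (hfzero y hyb)
  rw [integral_eq_zero_of_ae hae] at hνpos
  exact lt_irrefl 0 hνpos

lemma sptSet_eq_of_two_limits {m : ℕ → Measure E} {a b : ℕ → ℝ}
    (hap : ∀ k, 0 < a k) (hbp : ∀ k, 0 < b k)
    {μ ν : Measure E} [IsLocallyFiniteMeasure μ] [IsLocallyFiniteMeasure ν]
    (hμ0 : μ ≠ 0) (hν0 : ν ≠ 0)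
    (hμ : WeakStarTendsto (fun k => ENNReal.ofReal (a k) • m k) μ)
    (hν : WeakStarTendsto (fun k => ENNReal.ofReal (b k) • m k) ν) :
    sptSet μ = sptSet ν := by
  obtain ⟨f, hfc, hfs, hf0, hfpos⟩ := exists_pos_integral μ hμ0
  obtain ⟨g0, hg0c, hg0s, hg00, hg0pos⟩ := exists_pos_integral ν hν0
  have hIa : ∀ (g : E → ℝ) (k : ℕ),
      ∫ x, g x ∂(ENNReal.ofReal (a k) • m k) = a k * ∫ x, g x ∂(m k) := by
    intro g k
    rw [integral_smul_measure, ENNReal.toReal_ofReal (hap k).le, smul_eq_mul]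
  have hIb : ∀ (g : E → ℝ) (k : ℕ),
      ∫ x, g x ∂(ENNReal.ofReal (b k) • m k) = b k * ∫ x, g x ∂(m k) := by
    intro g k
    rw [integral_smul_measure, ENNReal.toReal_ofReal (hbp k).le, smul_eq_mul]
  set lam : ℝ := (∫ x, f x ∂ν) / (∫ x, f x ∂μ) with hlamdef
  have h1 := hμ f hfc hfs
  have h2 := hν f hfc hfs
  have htlim : Tendsto (fun k => b k / a k) atTop (𝓝 lam) := by
    have hdiv : Tendsto (fun k => (∫ x, f x ∂(ENNReal.ofReal (b k) • m k)) /
        (∫ x, f x ∂(ENNReal.ofReal (a k) • m k))) atTop (𝓝 lam) :=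
      h2.div h1 (ne_of_gt hfpos)
    apply hdiv.congr'
    have hev : ∀ᶠ k in atTop, 0 < ∫ x, f x ∂(ENNReal.ofReal (a k) • m k) :=
      h1.eventually (eventually_gt_nhds hfpos)
    filter_upwards [hev] with k hk
    rw [hIa, hIb]
    rw [hIa] at hk
    have hJ : ∫ x, f x ∂(m k) ≠ 0 := by
      intro hJ0
      rw [hJ0, mul_zero] at hk
      exact lt_irrefl 0 hk
    rw [mul_div_mul_right _ _ hJ]
  have hint : ∀ g : E → ℝ, Continuous g → HasCompactSupport g →
      ∫ x, g x ∂ν = lam * ∫ x, g x ∂μ := by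
    intro g hgc hgs
    have hg1 := hμ g hgc hgs
    have hg2 := hν g hgc hgs
    have h3 : Tendsto (fun k => (b k / a k) * ∫ x, g x ∂(ENNReal.ofReal (a k) • m k))
        atTop (𝓝 (lam * ∫ x, g x ∂μ)) := htlim.mul hg1
    have heq : ∀ k, (b k / a k) * ∫ x, g x ∂(ENNReal.ofReal (a k) • m k)
        = ∫ x, g x ∂(ENNReal.ofReal (b k) • m k) := by
      intro k
      rw [hIa, hIb, ← mul_assoc, div_mul_cancel₀ _ (hap k).ne']
    exact tendsto_nhds_unique hg2 (h3.congr heq)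
  have hlam : 0 < lam := by
    have hge : 0 ≤ lam := div_nonneg (integral_nonneg hf0) hfpos.le
    rcases hge.lt_or_eq with h | h
    · exact h
    · exfalso
      have := hint g0 hg0c hg0s
      rw [← h, zero_mul] at this
      rw [this] at hg0pos
      exact lt_irrefl 0 hg0pos
  apply subset_antisymm
  · exact sptSet_subset_of_integral_eq μ ν hlam hint
  · refine sptSet_subset_of_integral_eq ν μ (inv_pos.2 hlam) (fun g hgc hgs => ?_)
    rw [hint g hgc hgs]
    field_simp

lemma locHaus_subset {F : ℕ → Set E} {S T : Set E}
    (hF0 : ∀ i, (0 : E) ∈ F i) (hT : IsClosed T) (hTne : T.Nonempty)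
    (h1 : LocHausTendsto F S) (h2 : LocHausTendsto F T) : S ⊆ T := by
  intro z hz
  obtain ⟨w, hw⟩ := hTne
  set R : ℝ := ‖z‖ + ‖w‖ + 1 with hRdef
  have hRpos : 0 < R := by positivity
  rw [← hT.closure_eq, Metric.mem_closure_iff]
  intro ε hε
  have hpos : 0 < R⁻¹ * (ε / 2) := by positivity
  have e1 := (h1 R hRpos).eventually (eventually_lt_nhds hpos)
  have e2 := (h2 R hRpos).eventually (eventually_lt_nhds hpos)
  obtain ⟨i, hi1, hi2⟩ := (e1.and e2).exists
  have hd1 : hausdorffDist (F i ∩ closedBall 0 R) (S ∩ closedBall 0 R) < ε / 2 := by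
    have := (mul_lt_mul_iff_right₀ (inv_pos.2 hRpos)).1 hi1
    exact this
  have hd2 : hausdorffDist (F i ∩ closedBall 0 R) (T ∩ closedBall 0 R) < ε / 2 := by
    exact (mul_lt_mul_iff_right₀ (inv_pos.2 hRpos)).1 hi2
  have hAne : (F i ∩ closedBall 0 R).Nonempty :=
    ⟨0, hF0 i, mem_closedBall_self hRpos.le⟩
  have hSne' : (S ∩ closedBall 0 R).Nonempty :=
    ⟨z, hz, by rw [mem_closedBall_zero_iff]; linarith [norm_nonneg w]⟩
  have hTne' : (T ∩ closedBall 0 R).Nonempty :=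
    ⟨w, hw, by rw [mem_closedBall_zero_iff]; linarith [norm_nonneg z]⟩
  have hbA : Bornology.IsBounded (F i ∩ closedBall 0 R) :=
    (isBounded_closedBall).subset inter_subset_right
  have hbS : Bornology.IsBounded (S ∩ closedBall 0 R) :=
    (isBounded_closedBall).subset inter_subset_right
  have hbT : Bornology.IsBounded (T ∩ closedBall 0 R) :=
    (isBounded_closedBall).subset inter_subset_right
  have fin1 : EMetric.hausdorffEdist (F i ∩ closedBall 0 R) (S ∩ closedBall 0 R) ≠ ⊤ :=
    hausdorffEdist_ne_top_of_nonempty_of_bounded hAne hSne' hbA hbS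
  have fin2 : EMetric.hausdorffEdist (F i ∩ closedBall 0 R) (T ∩ closedBall 0 R) ≠ ⊤ :=
    hausdorffEdist_ne_top_of_nonempty_of_bounded hAne hTne' hbA hbT
  have hzmem : z ∈ S ∩ closedBall 0 R :=
    ⟨hz, by rw [mem_closedBall_zero_iff]; linarith [norm_nonneg w]⟩
  obtain ⟨y, hyF, hy⟩ := exists_dist_lt_of_hausdorffDist_lt' hzmem hd1 fin1
  obtain ⟨t, htT, ht⟩ := exists_dist_lt_of_hausdorffDist_lt hyF hd2 fin2
  refine ⟨t, htT.1, ?_⟩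
  calc dist z t ≤ dist z y + dist y t := dist_triangle z y t
    _ < ε / 2 + ε / 2 := add_lt_add (by rwa [dist_comm]) ht
    _ = ε := by ring

lemma sptSet_blowup (ν : Measure E) (x : E) {r : ℝ} (hr : 0 < r) :
    sptSet (blowup ν x r) = (fun y => r⁻¹ • (y - x)) '' sptSet ν := by
  have hmeas : Measurable (fun y : E => r⁻¹ • (y - x)) :=
    by fun_prop
  have key : ∀ (w : E) (ρ : ℝ),
      (blowup ν x r) (ball w ρ) = ν (ball (x + r • w) (r * ρ)) := by
    intro w ρ
    rw [blowup, Measure.map_apply hmeas measurableSet_ball]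
    congr 1
    ext y
    simp only [mem_preimage, mem_ball]
    rw [dist_eq_norm, dist_eq_norm]
    have heq : r⁻¹ • (y - x) - w = r⁻¹ • (y - (x + r • w)) := by
      rw [smul_sub, smul_sub, smul_add, smul_smul, inv_mul_cancel₀ hr.ne', one_smul]
      abel
    rw [heq, norm_smul, norm_inv, Real.norm_eq_abs, abs_of_pos hr, inv_mul_eq_div,
      div_lt_iff₀ hr, mul_comm]
  ext w
  simp only [sptSet, mem_setOf_eq, mem_image]
  constructor
  · intro hw
    refine ⟨x + r • w, fun ρ hρ => ?_, ?_⟩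
    · have := hw (ρ / r) (by positivity)
      rwa [key, mul_div_cancel₀ _ hr.ne'] at this
    · rw [add_sub_cancel_left, smul_smul, inv_mul_cancel₀ hr.ne', one_smul]
  · rintro ⟨y, hy, rfl⟩ ρ hρ
    rw [key]
    have hxy : x + r • (r⁻¹ • (y - x)) = y := by
      rw [smul_smul, mul_inv_cancel₀ hr.ne', one_smul]
      abel
    rw [hxy]
    exact hy (r * ρ) (by positivity)

end Aux

/-- Tangents to tangents are tangents, set-theoretic version: if (a) tangent measures of `ω`
at `p` are invariant under the blow-ups `T_{x,r}` at points of their supports, and (b) every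
sequence of scales admits a subsequence along which the normalized blow-ups of `ω` converge
weak-* to a tangent measure `ν` while `(F − p)/ρ_{i_k} → spt ν` locally Hausdorff, then for
every `Σ ∈ Tan(F,p)`, `x ∈ Σ` and `r > 0` one has `(Σ − x)/r ∈ Tan(F,p)`, where `F = spt ω`. -/
theorem tangents_to_tangents_sets {n : ℕ}
    (ω : Measure (EuclideanSpace ℝ (Fin n))) [IsLocallyFiniteMeasure ω] (hω : ω ≠ 0)
    (p : EuclideanSpace ℝ (Fin n)) (hp : p ∈ sptSet ω)
    (ha : ∀ ν ∈ TanM ω p, ∀ x ∈ sptSet ν, ∀ r : ℝ, 0 < r → blowup ν x r ∈ TanM ω p)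
    (hb : ∀ ρ : ℕ → ℝ, (∀ i, 0 < ρ i) → Tendsto ρ atTop (𝓝 0) →
      ∃ φ : ℕ → ℕ, StrictMono φ ∧ ∃ c : ℕ → ℝ, (∀ k, 0 < c k) ∧ ∃ ν ∈ TanM ω p,
        WeakStarTendsto (fun k => ENNReal.ofReal (c k) • blowup ω p (ρ (φ k))) ν ∧
        LocHausTendsto (fun k => (fun x => (ρ (φ k))⁻¹ • (x - p)) '' sptSet ω) (sptSet ν)) :
    ∀ S ∈ TanSet (sptSet ω) p, ∀ x ∈ S, ∀ r : ℝ, 0 < r →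
      (fun y => r⁻¹ • (y - x)) '' S ∈ TanSet (sptSet ω) p := by
  rintro S ⟨hSne, hScl, ρ, hρpos, hρ0, hSloc⟩ x hxS r hr
  obtain ⟨φ, hφ, c, hc, ν, hνTan, hνw, hνloc⟩ := hb ρ hρpos hρ0
  have hSsub : LocHausTendsto
      (fun k => (fun y => (ρ (φ k))⁻¹ • (y - p)) '' sptSet ω) S := by
    intro R hR
    exact (hSloc R hR).comp hφ.tendsto_atTop
  have h0 : ∀ k, (0 : EuclideanSpace ℝ (Fin n)) ∈
      (fun y => (ρ (φ k))⁻¹ • (y - p)) '' sptSet ω :=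
    fun k => ⟨p, hp, by simp⟩
  have hνcl := sptSet_isClosed ν
  have hνne := sptSet_nonempty hνTan.1
  have hSeq : S = sptSet ν :=
    subset_antisymm (locHaus_subset h0 hνcl hνne hSsub hνloc)
      (locHaus_subset h0 hScl hSne hνloc hSsub)
  have hxν : x ∈ sptSet ν := hSeq ▸ hxS
  obtain ⟨hμ'0, hμ'fin, c', r', hc', hr'pos, hr'0, hμ'w⟩ := ha ν hνTan x hxν r hr
  obtain ⟨φ', hφ', c'', hc'', ν', hν'Tan, hν'w, hν'loc⟩ := hb r' hr'pos hr'0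
  haveI := hμ'fin
  haveI := hν'Tan.2.1
  have hμ'w' : WeakStarTendsto
      (fun k => ENNReal.ofReal (c' (φ' k)) • blowup ω p (r' (φ' k))) (blowup ν x r) := by
    intro g hgc hgs
    exact (hμ'w g hgc hgs).comp hφ'.tendsto_atTop
  have hspt : sptSet (blowup ν x r) = sptSet ν' :=
    sptSet_eq_of_two_limits (fun k => hc' (φ' k)) hc'' hμ'0 hν'Tan.1 hμ'w' hν'w
  have himg : (fun y => r⁻¹ • (y - x)) '' S = sptSet ν' := by
    rw [hSeq, ← sptSet_blowup ν x hr, hspt]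
  rw [himg]
  exact ⟨sptSet_nonempty hν'Tan.1, sptSet_isClosed ν', fun k => r' (φ' k),
    fun k => hr'pos (φ' k), hr'0.comp hφ'.tendsto_atTop, hν'loc⟩
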